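/- Let p be a bivariate real-zero polynomial of total degree d > 0 with p(0,0) = 1. Then for every ε > 0 there exists a bivariate real-zero polynomial q of total degree d with q(0,0) = 1, each of whose coefficients is within ε of the corresponding coefficient of p, such that for every x2 ∈ ℝ the one-variable polynomial t ↦ t^d · q(1/t, x2/t) (a polynomial in t of degree d) has only simple real zeros. -/

import Mathlib

open MvPolynomial in
/-- A bivariate real polynomial is a real-zero polynomial if for every
`(x1, x2) ∈ ℝ²` all complex zeros of `t ↦ p(t x1, t x2)` are real. -/
def IsRealZeroPoly (p : MvPolynomial (Fin 2) ℝ) : Prop :=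
  ∀ x1 x2 : ℝ, ∀ t : ℂ,
    eval ![t * (x1 : ℂ), t * (x2 : ℂ)] (MvPolynomial.map (algebraMap ℝ ℂ) p) = 0 →
      t.im = 0

open MvPolynomial in
/-- For a bivariate polynomial `p` of total degree at most `d` and `x2 ∈ ℝ`,
the one-variable polynomial `t ↦ t^d · p(1/t, x2/t)`. -/
noncomputable def checkPoly (d : ℕ) (p : MvPolynomial (Fin 2) ℝ) (x2 : ℝ) :
    Polynomial ℝ :=
  ∑ m ∈ p.support,
    Polynomial.C (coeff m p * x2 ^ (m 1)) * Polynomial.X ^ (d - (m 0 + m 1))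

open Polynomial

noncomputable def PP (s : Multiset ℂ) : Polynomial ℂ := (s.map fun r => X - C r).prod

lemma PP_cons (a : ℂ) (s : Multiset ℂ) : PP (a ::ₘ s) = (X - C a) * PP s := by
  simp [PP]

lemma eval_PP_ne_zero {s : Multiset ℂ} {z : ℂ} (h : ∀ r ∈ s, z ≠ r) :
    eval z (PP s) ≠ 0 := by
  rw [PP, eval_multiset_prod]
  refine Multiset.prod_ne_zero ?_
  intro hmem
  obtain ⟨q, hq, hq0⟩ := Multiset.mem_map.1 hmem
  obtain ⟨w, hw, rfl⟩ := Multiset.mem_map.1 hq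
  simp only [eval_sub, eval_X, eval_C] at hq0
  exact h w hw (sub_eq_zero.1 hq0)

lemma eval_PP_deriv {s : Multiset ℂ} {z : ℂ} (h : ∀ r ∈ s, z ≠ r) :
    eval z (derivative (PP s)) = eval z (PP s) * (s.map fun r => (z - r)⁻¹).sum := by
  induction s using Multiset.induction_on with
  | empty => simp [PP]
  | cons a s ih =>
      have ha : z - a ≠ 0 := sub_ne_zero.2 (h a (Multiset.mem_cons_self a s))
      have hs : ∀ r ∈ s, z ≠ r := fun r hr => h r (Multiset.mem_cons_of_mem hr)
      rw [PP_cons, derivative_mul]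
      simp only [eval_add, eval_mul, eval_sub, eval_X, eval_C, derivative_sub,
        derivative_X, derivative_C, sub_zero, eval_one, one_mul, ih hs,
        Multiset.map_cons, Multiset.sum_cons]
      field_simp

lemma eval_PP_wronskian {s : Multiset ℂ} {z : ℂ} (h : ∀ r ∈ s, z ≠ r) :
    eval z (derivative (PP s) ^ 2 - PP s * derivative (derivative (PP s))) =
      (eval z (PP s)) ^ 2 * (s.map fun r => ((z - r)⁻¹) ^ 2).sum := by
  induction s using Multiset.induction_on with
  | empty => simp [PP]
  | cons a s ih =>
      have ha : z - a ≠ 0 := sub_ne_zero.2 (h a (Multiset.mem_cons_self a s))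
      have hs : ∀ r ∈ s, z ≠ r := fun r hr => h r (Multiset.mem_cons_of_mem hr)
      have key : derivative (PP (a ::ₘ s)) ^ 2 - PP (a ::ₘ s) * derivative (derivative (PP (a ::ₘ s)))
          = PP s ^ 2 + (X - C a) ^ 2 * (derivative (PP s) ^ 2 - PP s * derivative (derivative (PP s))) := by
        rw [PP_cons]
        have d1 : derivative ((X - C a) * PP s) = PP s + (X - C a) * derivative (PP s) := by
          simp [derivative_mul]
        rw [d1]
        have d2 : derivative (PP s + (X - C a) * derivative (PP s))
            = 2 * derivative (PP s) + (X - C a) * derivative (derivative (PP s)) := by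
          simp [derivative_mul, derivative_add]
          ring
        rw [d2]
        ring
      rw [key, PP_cons]
      simp only [eval_add, eval_mul, eval_pow, eval_sub, eval_X, eval_C, ih hs,
        Multiset.map_cons, Multiset.sum_cons]
      field_simp

/-- All complex roots are real. -/
def RZ (F : Polynomial ℂ) : Prop := ∀ z : ℂ, F.IsRoot z → z.im = 0

lemma multiset_im_sum (s : Multiset ℂ) : s.sum.im = (s.map Complex.im).sum := by
  simpa [Complex.coe_imAddGroupHom] using map_multiset_sum Complex.imAddGroupHom s

lemma multiset_sum_pos (s : Multiset ℝ) (h : ∀ x ∈ s, 0 < x) (hne : s ≠ 0) : 0 < s.sum := by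
  induction s using Multiset.induction_on with
  | empty => simp at hne
  | cons a s ih =>
      rcases eq_or_ne s 0 with rfl | hs
      · simpa using h a (Multiset.mem_cons_self a 0)
      · have h1 : 0 < s.sum := ih (fun x hx => h x (Multiset.mem_cons_of_mem hx)) hs
        have := h a (Multiset.mem_cons_self a s)
        rw [Multiset.sum_cons]; linarith

lemma F_factor {F : Polynomial ℂ} :
    Polynomial.C F.leadingCoeff * PP F.roots = F :=
  Polynomial.C_leadingCoeff_mul_prod_multiset_X_sub_C
    (Polynomial.splits_iff_card_roots.mp (IsAlgClosed.splits F))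

lemma roots_ne_of_RZ {F : Polynomial ℂ} (hrz : RZ F) {z : ℂ} (hz : ¬ F.IsRoot z) :
    ∀ r ∈ F.roots, z ≠ r := by
  rintro r hr rfl
  exact hz (mem_roots'.1 hr).2

lemma step_real {F : Polynomial ℂ} (hF : F ≠ 0) (c : ℝ) (hrz : RZ F) :
    RZ (F + C (c:ℂ) * derivative F) := by
  intro z hz
  by_cases hFz : F.IsRoot z
  · exact hrz z hFz
  have hne := roots_ne_of_RZ hrz hFz
  have hlc : F.leadingCoeff ≠ 0 := Polynomial.leadingCoeff_ne_zero.2 hF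
  have hPP := eval_PP_ne_zero hne
  have hD := eval_PP_deriv hne
  set S := (F.roots.map fun r => (z - r)⁻¹).sum with hS
  have hev : eval z F + (c:ℂ) * eval z (derivative F) = 0 := by
    simpa using hz
  have hF' : derivative F = C F.leadingCoeff * derivative (PP F.roots) := by
    conv_lhs => rw [← F_factor (F := F)]
    simp [derivative_mul]
  have hFev : eval z F = F.leadingCoeff * eval z (PP F.roots) := by
    conv_lhs => rw [← F_factor (F := F)]; simp
  rw [hFev, hF'] at hev
  simp only [eval_mul, eval_C, hD] at hev
  have key : (1 : ℂ) + (c:ℂ) * S = 0 := by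
    have h2 : F.leadingCoeff * eval z (PP F.roots) * (1 + (c:ℂ) * S) = 0 := by
      rw [← hev]; ring
    rcases mul_eq_zero.1 h2 with h3 | h3
    · exact absurd h3 (mul_ne_zero hlc hPP)
    · exact h3
  have hcne : (c : ℂ) ≠ 0 := by
    rintro h0; rw [h0] at key; simp at key
  have hcR : c ≠ 0 := fun h => hcne (by exact_mod_cast h)
  have key2 : (c:ℂ) * S = -1 := by linear_combination key
  have h4 : c * S.im = 0 := by
    have := congrArg Complex.im key2
    simpa [Complex.mul_im] using this
  have hSim : S.im = 0 := by
    rcases mul_eq_zero.1 h4 with h | h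
    · exact absurd h hcR
    · exact h
  -- roots nonempty
  have hroots : F.roots ≠ 0 := by
    rintro h0
    rw [h0] at hS
    simp [hS] at key
  by_contra hzim
  have him : S.im = -z.im * ((F.roots.map fun r => (Complex.normSq (z - r))⁻¹).sum) := by
    rw [hS, multiset_im_sum, Multiset.map_map]
    rw [Multiset.sum_map_mul_left.symm]
    congr 1
    apply Multiset.map_congr rfl
    intro r hr
    have hrim : r.im = 0 := hrz r (mem_roots'.1 hr).2
    simp [Complex.inv_im, Complex.sub_im, hrim]
    ring
  have hpos : 0 < (F.roots.map fun r => (Complex.normSq (z - r))⁻¹).sum := by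
    apply multiset_sum_pos
    · intro x hx
      obtain ⟨r, hr, rfl⟩ := Multiset.mem_map.1 hx
      have : z - r ≠ 0 := sub_ne_zero.2 (hne r hr)
      exact inv_pos.2 (Complex.normSq_pos.2 this)
    · simpa using hroots
  rw [him] at hSim
  have : z.im = 0 := by
    rcases mul_eq_zero.1 hSim with h | h
    · linarith [neg_eq_zero.1 h]
    · linarith
  exact hzim this

lemma real_inv_sq_pos {w : ℂ} (hw : w ≠ 0) (him : w.im = 0) :
    0 < (((w)⁻¹) ^ 2).re ∧ ((w⁻¹) ^ 2).im = 0 := by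
  have hwre : w = ((w.re : ℝ) : ℂ) := Complex.ext rfl (by simp [him])
  have hre : w.re ≠ 0 := by
    rintro h; exact hw (Complex.ext h him)
  rw [hwre, ← Complex.ofReal_inv, ← Complex.ofReal_pow]
  have h2 : (0:ℝ) < (w.re⁻¹) ^ 2 := by
    have := inv_ne_zero hre
    positivity
  constructor
  · rw [Complex.ofReal_re]; exact h2
  · rw [Complex.ofReal_im]

lemma step_no_new_double {F : Polynomial ℂ} (hF : F ≠ 0) (c : ℝ) (hc : c ≠ 0)
    (hrz : RZ F) {z : ℂ} (hzim : z.im = 0) (hFz : ¬ F.IsRoot z)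
    (hroot : (F + C (c:ℂ) * derivative F).IsRoot z) :
    ¬ (derivative (F + C (c:ℂ) * derivative F)).IsRoot z := by
  intro hroot'
  have hne := roots_ne_of_RZ hrz hFz
  have hlc : F.leadingCoeff ≠ 0 := Polynomial.leadingCoeff_ne_zero.2 hF
  have hPP := eval_PP_ne_zero hne
  have hcc : (c : ℂ) ≠ 0 := fun h => hc (by exact_mod_cast h)
  -- roots nonempty
  have hroots : F.roots ≠ 0 := by
    rintro h0
    have hPP1 : PP F.roots = 1 := by rw [h0]; simp [PP]
    have hFc : F = C F.leadingCoeff := by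
      conv_lhs => rw [← F_factor (F := F)]; rw [hPP1, mul_one]
    have : eval z (F + C (c:ℂ) * derivative F) = F.leadingCoeff := by
      rw [hFc]; simp
    rw [hroot] at this
    exact hlc this.symm
  -- relations from double root
  have e1 : eval z F + (c:ℂ) * eval z (derivative F) = 0 := by simpa using hroot
  have e2 : eval z (derivative F) + (c:ℂ) * eval z (derivative (derivative F)) = 0 := by
    simpa [derivative_add, derivative_mul] using hroot'
  have eF' : (c:ℂ) * eval z (derivative F) = - eval z F := by linear_combination e1
  have eF'' : (c:ℂ)^2 * eval z (derivative (derivative F)) = eval z F := by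
    linear_combination (c:ℂ) * e2 - eF'
  have ew : eval z (derivative F ^ 2 - F * derivative (derivative F)) = 0 := by
    have h6 : (c:ℂ)^2 * eval z (derivative F ^ 2 - F * derivative (derivative F)) = 0 := by
      simp only [eval_sub, eval_pow, eval_mul]
      linear_combination ((c:ℂ) * eval z (derivative F) - eval z F) * eF'
        + (- eval z F) * eF''
    rcases mul_eq_zero.1 h6 with h | h
    · exact absurd h (pow_ne_zero 2 hcc)
    · exact h
  -- rewrite via PP
  have hF' : derivative F = C F.leadingCoeff * derivative (PP F.roots) := by
    conv_lhs => rw [← F_factor (F := F)]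
    simp [derivative_mul]
  have hF'' : derivative (derivative F) = C F.leadingCoeff * derivative (derivative (PP F.roots)) := by
    rw [hF', derivative_mul]; simp
  have hFe : eval z F = F.leadingCoeff * eval z (PP F.roots) := by
    conv_lhs => rw [← F_factor (F := F)]
    simp
  have ew2 : (F.leadingCoeff)^2 * eval z (derivative (PP F.roots) ^ 2
      - PP F.roots * derivative (derivative (PP F.roots))) = 0 := by
    rw [← ew, hF'', hF']
    simp only [eval_sub, eval_pow, eval_mul, eval_C, hFe]
    ring
  have ew3 : eval z (derivative (PP F.roots) ^ 2
      - PP F.roots * derivative (derivative (PP F.roots))) = 0 := by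
    rcases mul_eq_zero.1 ew2 with h | h
    · exact absurd h (pow_ne_zero 2 hlc)
    · exact h
  rw [eval_PP_wronskian hne] at ew3
  have hS2 : (F.roots.map fun r => ((z - r)⁻¹) ^ 2).sum = 0 := by
    rcases mul_eq_zero.1 ew3 with h | h
    · exact absurd h (pow_ne_zero 2 hPP)
    · exact h
  -- but the sum has positive real part
  have hpos : 0 < ((F.roots.map fun r => ((z - r)⁻¹) ^ 2).sum).re := by
    have : ((F.roots.map fun r => ((z - r)⁻¹) ^ 2).sum).re
        = ((F.roots.map fun r => (((z - r)⁻¹) ^ 2).re)).sum := by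
      have := map_multiset_sum Complex.reAddGroupHom (F.roots.map fun r => ((z - r)⁻¹) ^ 2)
      simpa [Multiset.map_map, Complex.coe_reAddGroupHom] using this
    rw [this]
    apply multiset_sum_pos
    · intro x hx
      obtain ⟨r, hr, rfl⟩ := Multiset.mem_map.1 hx
      have h1 : z - r ≠ 0 := sub_ne_zero.2 (hne r hr)
      have h2 : (z - r).im = 0 := by
        have := hrz r (mem_roots'.1 hr).2
        simp [Complex.sub_im, hzim, this]
      exact (real_inv_sq_pos h1 h2).1
    · simpa using hroots
  rw [hS2] at hpos
  simp at hpos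

lemma step_mult {F : Polynomial ℂ} (hF : F ≠ 0) {c : ℝ} (hc : c ≠ 0)
    (hG : F + C (c:ℂ) * derivative F ≠ 0) {z : ℂ} (hroot : F.IsRoot z) :
    rootMultiplicity z (F + C (c:ℂ) * derivative F) = rootMultiplicity z F - 1 := by
  set G := F + C (c:ℂ) * derivative F with hGdef
  set k := rootMultiplicity z F with hk
  have hk1 : 1 ≤ k := (rootMultiplicity_pos hF).2 hroot
  have hF' : F.derivative ≠ 0 := by
    intro h0
    have hnd : F.natDegree = 0 := natDegree_eq_zero_of_derivative_eq_zero h0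
    have : F = C (F.coeff 0) := eq_C_of_natDegree_eq_zero hnd
    rw [this] at hroot
    simp only [IsRoot, eval_C] at hroot
    rw [this, hroot] at hF
    simp at hF
  have hmultF' : rootMultiplicity z F.derivative = k - 1 :=
    derivative_rootMultiplicity_of_root hroot
  have hdvdF : (X - C z) ^ (k - 1) ∣ F :=
    dvd_trans (pow_dvd_pow _ (Nat.sub_le k 1)) (pow_rootMultiplicity_dvd F z)
  have hdvdF' : (X - C z) ^ (k - 1) ∣ F.derivative := by
    rw [← hmultF']; exact pow_rootMultiplicity_dvd _ z
  have hle : k - 1 ≤ rootMultiplicity z G := by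
    rw [le_rootMultiplicity_iff hG]
    exact dvd_add hdvdF (Dvd.dvd.mul_left hdvdF' _)
  have hub : rootMultiplicity z G ≤ k - 1 := by
    rw [rootMultiplicity_le_iff hG]
    intro hdvd
    rw [Nat.sub_add_cancel hk1] at hdvd
    have hdvdF2 : (X - C z) ^ k ∣ F := pow_rootMultiplicity_dvd F z
    have : (X - C z) ^ k ∣ C (c:ℂ) * F.derivative := by
      have := dvd_sub hdvd hdvdF2
      simpa [hGdef] using this
    have hdvd' : (X - C z) ^ k ∣ F.derivative := by
      rcases this with ⟨w, hw⟩
      refine ⟨C (c:ℂ)⁻¹ * w, ?_⟩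
      have hcc : (c:ℂ) ≠ 0 := fun h => hc (by exact_mod_cast h)
      have h5 : C ((c:ℂ)⁻¹) * (C (c:ℂ) * F.derivative)
          = C ((c:ℂ)⁻¹) * ((X - C z) ^ k * w) := by rw [hw]
      rw [← mul_assoc, ← C_mul, inv_mul_cancel₀ hcc, C_1, one_mul] at h5
      rw [h5]; ring
    have : k ≤ rootMultiplicity z F.derivative := (le_rootMultiplicity_iff hF').2 hdvd'
    omega
  omega

open Classical in
noncomputable def exF (F : Polynomial ℂ) : ℕ :=
  ∑ r ∈ F.roots.toFinset, (F.roots.count r - 1)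

lemma exF_le {F : Polynomial ℂ} {d : ℕ} (hd : F.natDegree = d) (hF : F ≠ 0)
    (hd0 : 0 < d) : exF F ≤ d - 1 := by
  classical
  have hcard : Multiset.card F.roots = d := by
    rw [← hd]
    exact Polynomial.splits_iff_card_roots.mp (IsAlgClosed.splits F)
  have hsum : ∑ r ∈ F.roots.toFinset, F.roots.count r = d := by
    rw [Multiset.toFinset_sum_count_eq, hcard]
  have hsplit : exF F + F.roots.toFinset.card = d := by
    rw [exF, ← hsum, Finset.card_eq_sum_ones, ← Finset.sum_add_distrib]
    apply Finset.sum_congr rfl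
    intro r hr
    have : 1 ≤ F.roots.count r := (Multiset.count_pos).2 (Multiset.mem_toFinset.1 hr)
    omega
  have hne : F.roots.toFinset.Nonempty := by
    rw [Multiset.toFinset_nonempty]
    intro h0
    rw [h0] at hcard
    simp at hcard
    omega
  have := Finset.card_pos.2 hne
  omega

lemma exF_step {F : Polynomial ℂ} (hF : F ≠ 0) {c : ℝ} (hc : c ≠ 0) (hrz : RZ F)
    (hG : F + C (c:ℂ) * derivative F ≠ 0) :
    exF (F + C (c:ℂ) * derivative F) ≤ exF F ∧
      (0 < exF F → exF (F + C (c:ℂ) * derivative F) < exF F) := by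
  classical
  set G := F + C (c:ℂ) * derivative F with hGdef
  have hrzG : RZ G := step_real hF c hrz
  have hcount : ∀ r, F.IsRoot r → G.roots.count r = F.roots.count r - 1 := by
    intro r hr
    rw [Polynomial.count_roots, Polynomial.count_roots]
    exact step_mult hF hc hG hr
  have hnew : ∀ r ∈ G.roots.toFinset, ¬ F.IsRoot r → G.roots.count r = 1 := by
    intro r hr hFr
    have hGr : G.IsRoot r := (mem_roots'.1 (Multiset.mem_toFinset.1 hr)).2
    have h1 : 1 ≤ G.roots.count r :=
      (Multiset.count_pos).2 (Multiset.mem_toFinset.1 hr)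
    by_contra hne
    have h2 : 2 ≤ G.roots.count r := by omega
    have h2' : 2 ≤ rootMultiplicity r G := by rwa [Polynomial.count_roots] at h2
    have hG' : (derivative G).IsRoot r := by
      have := derivative_rootMultiplicity_of_root hGr
      have hpos : 0 < rootMultiplicity r (derivative G) := by omega
      exact (Polynomial.rootMultiplicity_pos').1 hpos |>.2
    exact step_no_new_double hF c hc hrz (hrzG r hGr) hFr hGr hG'
  set A := F.roots.toFinset with hA
  set SG := G.roots.toFinset with hSG
  have hmemA : ∀ r, r ∈ A ↔ F.IsRoot r := by
    intro r
    rw [hA, Multiset.mem_toFinset, mem_roots']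
    exact ⟨fun h => h.2, fun h => ⟨hF, h⟩⟩
  have e1 : exF G = ∑ r ∈ SG ∩ A, (G.roots.count r - 1) := by
    rw [exF]
    refine (Finset.sum_subset Finset.inter_subset_left ?_).symm
    intro r hr hrn
    have hFr : ¬ F.IsRoot r := by
      intro hFr
      exact hrn (Finset.mem_inter.2 ⟨hr, (hmemA r).2 hFr⟩)
    simp [hnew r hr hFr]
  have e2 : ∑ r ∈ SG ∩ A, (G.roots.count r - 1) = ∑ r ∈ SG ∩ A, (F.roots.count r - 2) := by
    apply Finset.sum_congr rfl
    intro r hr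
    have hFr : F.IsRoot r := (hmemA r).1 (Finset.mem_inter.1 hr).2
    rw [hcount r hFr]
    omega
  have e3 : ∑ r ∈ SG ∩ A, (F.roots.count r - 2) ≤ ∑ r ∈ A, (F.roots.count r - 2) :=
    Finset.sum_le_sum_of_subset Finset.inter_subset_right
  have e4 : ∑ r ∈ A, (F.roots.count r - 2) ≤ ∑ r ∈ A, (F.roots.count r - 1) :=
    Finset.sum_le_sum fun r _ => by omega
  have hchain : exF G ≤ ∑ r ∈ A, (F.roots.count r - 2) := by
    rw [e1, e2]; exact e3
  constructor
  · calc exF G ≤ ∑ r ∈ A, (F.roots.count r - 2) := hchain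
      _ ≤ exF F := e4
  · intro hpos
    obtain ⟨r₀, hr₀, hr₀pos⟩ : ∃ r₀ ∈ A, 0 < F.roots.count r₀ - 1 := by
      by_contra hno
      push_neg at hno
      have : exF F = 0 := Finset.sum_eq_zero fun r hr => by have := hno r hr; omega
      omega
    have hstrict : ∑ r ∈ A, (F.roots.count r - 2) < ∑ r ∈ A, (F.roots.count r - 1) :=
      Finset.sum_lt_sum (fun r _ => by omega) ⟨r₀, hr₀, by omega⟩
    exact lt_of_le_of_lt hchain hstrict

/-! ### Real level -/

noncomputable def Phi (c : ℝ) (f : Polynomial ℝ) : Polynomial ℝ := f + C c * derivative f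

noncomputable def Mc (f : Polynomial ℝ) : Polynomial ℂ := f.map (algebraMap ℝ ℂ)

lemma Mc_ne_zero {f : Polynomial ℝ} (hf : f ≠ 0) : Mc f ≠ 0 :=
  (Polynomial.map_ne_zero_iff (algebraMap ℝ ℂ).injective).2 hf

lemma Mc_Phi (c : ℝ) (f : Polynomial ℝ) :
    Mc (Phi c f) = Mc f + C (c:ℂ) * derivative (Mc f) := by
  simp only [Mc, Phi, Polynomial.map_add, Polynomial.map_mul, Polynomial.map_C,
    derivative_map]
  norm_num [Complex.coe_algebraMap]

def Gd (d : ℕ) (f : Polynomial ℝ) : Prop := f.Monic ∧ f.natDegree = d ∧ RZ (Mc f)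

lemma Gd_Phi {d : ℕ} (hd : 0 < d) {f : Polynomial ℝ} (h : Gd d f) (c : ℝ) :
    Gd d (Phi c f) := by
  obtain ⟨hm, hdeg, hrz⟩ := h
  have hf : f ≠ 0 := hm.ne_zero
  have hlt : degree (C c * derivative f) < degree f := by
    rw [← smul_eq_C_mul]
    exact lt_of_le_of_lt (degree_smul_le _ _) (degree_derivative_lt hf)
  refine ⟨hm.add_of_left hlt, ?_, ?_⟩
  · rw [Phi, natDegree_eq_of_degree_eq (degree_add_eq_left_of_degree_lt hlt), hdeg]
  · rw [Mc_Phi]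
    exact step_real (Mc_ne_zero hf) c hrz

lemma natDegree_Mc (f : Polynomial ℝ) : (Mc f).natDegree = f.natDegree :=
  natDegree_map_eq_of_injective (algebraMap ℝ ℂ).injective f

theorem univ_main {d : ℕ} (hd : 0 < d) {f : Polynomial ℝ} (h : Gd d f) {c : ℝ}
    (hc : c ≠ 0) : ∀ z : ℂ, (Mc ((Phi c)^[d-1] f)).IsRoot z →
      z.im = 0 ∧ ¬ (derivative (Mc ((Phi c)^[d-1] f))).IsRoot z := by
  classical
  have key : ∀ k : ℕ, Gd d ((Phi c)^[k] f) ∧ exF (Mc ((Phi c)^[k] f)) ≤ (d-1) - k := by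
    intro k
    induction k with
    | zero =>
        refine ⟨h, ?_⟩
        simpa using exF_le (d := d) (by rw [natDegree_Mc, h.2.1]) (Mc_ne_zero h.1.ne_zero) hd
    | succ k ih =>
        obtain ⟨hGd, hex⟩ := ih
        have hGd' : Gd d ((Phi c)^[k+1] f) := by
          rw [Function.iterate_succ_apply']
          exact Gd_Phi hd hGd c
        refine ⟨hGd', ?_⟩
        have hne : Mc ((Phi c)^[k] f) ≠ 0 := Mc_ne_zero hGd.1.ne_zero
        have hne' : Mc ((Phi c)^[k] f) + C (c:ℂ) * derivative (Mc ((Phi c)^[k] f)) ≠ 0 := by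
          rw [← Mc_Phi]
          rw [Function.iterate_succ_apply'] at hGd'
          exact Mc_ne_zero hGd'.1.ne_zero
        have hstep := exF_step hne hc hGd.2.2 hne'
        rw [Function.iterate_succ_apply', Mc_Phi]
        rcases Nat.eq_zero_or_pos (exF (Mc ((Phi c)^[k] f))) with h0 | hpos
        · rw [h0] at hstep
          omega
        · have := hstep.2 hpos
          omega
  obtain ⟨hGd, hex⟩ := key (d-1)
  have hex0 : exF (Mc ((Phi c)^[d-1] f)) = 0 := by omega
  set G := Mc ((Phi c)^[d-1] f) with hGdef
  have hGne : G ≠ 0 := Mc_ne_zero hGd.1.ne_zero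
  intro z hz
  have hzim : z.im = 0 := hGd.2.2 z hz
  refine ⟨hzim, ?_⟩
  have hmem : z ∈ G.roots.toFinset := Multiset.mem_toFinset.2 (mem_roots'.2 ⟨hGne, hz⟩)
  have hterm : G.roots.count z - 1 = 0 := by
    have := Finset.sum_eq_zero_iff.1 hex0 z hmem
    exact this
  have hcount1 : rootMultiplicity z G = 1 := by
    have h1 : 1 ≤ G.roots.count z := Multiset.count_pos.2 (Multiset.mem_toFinset.1 hmem)
    have := hterm
    rw [Polynomial.count_roots] at h1 this
    omega
  intro hroot'
  have hmult' : rootMultiplicity z (derivative G) = 0 := by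
    rw [derivative_rootMultiplicity_of_root hz, hcount1]
  have hGd' : derivative G ≠ 0 := by
    intro h0
    have := natDegree_eq_zero_of_derivative_eq_zero h0
    rw [hGdef, natDegree_Mc, hGd.2.1] at this
    omega
  have := (rootMultiplicity_pos hGd').2 hroot'
  omega

/-! ### Multivariate level -/

open MvPolynomial

noncomputable def e0 : Fin 2 →₀ ℕ := Finsupp.single 0 1

noncomputable def lineP (x1 x2 : ℝ) : MvPolynomial (Fin 2) ℝ →+* Polynomial ℝ :=
  eval₂Hom Polynomial.C ![Polynomial.C x1 * Polynomial.X, Polynomial.C x2 * Polynomial.X]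

noncomputable def fP (d : ℕ) (x1 x2 : ℝ) (p : MvPolynomial (Fin 2) ℝ) : Polynomial ℝ :=
  (lineP x1 x2 p).reflect d

noncomputable def Td (d : ℕ) (r : MvPolynomial (Fin 2) ℝ) : MvPolynomial (Fin 2) ℝ :=
  ∑ m ∈ r.support, monomial (m + e0) ((((d - (m 0 + m 1)) : ℕ) : ℝ) * coeff m r)

noncomputable def Ns (d : ℕ) (s : ℝ) (r : MvPolynomial (Fin 2) ℝ) : MvPolynomial (Fin 2) ℝ :=
  r + MvPolynomial.C s * Td d r

lemma lineP_monomial (x1 x2 : ℝ) (n : Fin 2 →₀ ℕ) (a : ℝ) :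
    lineP x1 x2 (monomial n a) =
      Polynomial.C (a * x1 ^ (n 0) * x2 ^ (n 1)) * Polynomial.X ^ (n 0 + n 1) := by
  rw [lineP, eval₂Hom_monomial]
  rw [Finsupp.prod_fintype _ _ (fun i => pow_zero _)]
  rw [Fin.prod_univ_two]
  simp only [Matrix.cons_val_zero, Matrix.cons_val_one, Matrix.head_cons]
  rw [mul_pow, mul_pow, ← Polynomial.C_pow, ← Polynomial.C_pow, Polynomial.C_mul,
    Polynomial.C_mul, pow_add]
  ring

lemma fP_monomial (d : ℕ) (x1 x2 : ℝ) (n : Fin 2 →₀ ℕ) (a : ℝ) :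
    fP d x1 x2 (monomial n a) =
      Polynomial.C (a * x1 ^ (n 0) * x2 ^ (n 1)) *
        Polynomial.X ^ (Polynomial.revAt d (n 0 + n 1)) := by
  rw [fP, lineP_monomial, Polynomial.reflect_C_mul_X_pow]

lemma fP_sum {α : Type*} (d : ℕ) (x1 x2 : ℝ) (S : Finset α)
    (g : α → MvPolynomial (Fin 2) ℝ) :
    fP d x1 x2 (∑ i ∈ S, g i) = ∑ i ∈ S, fP d x1 x2 (g i) := by
  classical
  induction S using Finset.induction_on with
  | empty => simp [fP, Polynomial.reflect_zero]
  | insert _ _ hni ih =>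
      rw [Finset.sum_insert hni, Finset.sum_insert hni, ← ih, fP, fP, fP, map_add,
        Polynomial.reflect_add]

lemma fP_add (d : ℕ) (x1 x2 : ℝ) (p q : MvPolynomial (Fin 2) ℝ) :
    fP d x1 x2 (p + q) = fP d x1 x2 p + fP d x1 x2 q := by
  rw [fP, fP, fP, map_add, Polynomial.reflect_add]

lemma fP_C_mul (d : ℕ) (x1 x2 : ℝ) (s : ℝ) (p : MvPolynomial (Fin 2) ℝ) :
    fP d x1 x2 (MvPolynomial.C s * p) = Polynomial.C s * fP d x1 x2 p := by
  rw [fP, fP, map_mul]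
  have : lineP x1 x2 (MvPolynomial.C s) = Polynomial.C s := by
    rw [lineP, eval₂Hom_C]
  rw [this, Polynomial.reflect_C_mul]

lemma fP_eq_sum (d : ℕ) (x1 x2 : ℝ) (p : MvPolynomial (Fin 2) ℝ) :
    fP d x1 x2 p = ∑ m ∈ p.support,
      Polynomial.C (coeff m p * x1 ^ (m 0) * x2 ^ (m 1)) *
        Polynomial.X ^ (Polynomial.revAt d (m 0 + m 1)) := by
  conv_lhs => rw [p.as_sum]
  rw [fP_sum]
  exact Finset.sum_congr rfl fun m _ => fP_monomial d x1 x2 m (coeff m p)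

lemma e0_apply0 (m : Fin 2 →₀ ℕ) : (m + e0) 0 = m 0 + 1 := by
  simp [e0, Finsupp.add_apply]

lemma e0_apply1 (m : Fin 2 →₀ ℕ) : (m + e0) 1 = m 1 := by
  simp [e0, Finsupp.add_apply, Finsupp.single_apply]

lemma fP_Td (d : ℕ) (x1 x2 : ℝ) (r : MvPolynomial (Fin 2) ℝ)
    (hp : ∀ m ∈ r.support, m 0 + m 1 ≤ d) :
    fP d x1 x2 (Td d r) = Polynomial.C x1 * Polynomial.derivative (fP d x1 x2 r) := by
  rw [Td, fP_sum, fP_eq_sum, Polynomial.derivative_sum, Finset.mul_sum]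
  apply Finset.sum_congr rfl
  intro m hm
  rw [fP_monomial, e0_apply0, e0_apply1]
  have hk : m 0 + m 1 ≤ d := hp m hm
  rcases eq_or_lt_of_le hk with heq | hlt
  · -- top degree: both sides vanish
    rw [heq, Polynomial.revAt_le (le_refl d), Nat.sub_self]
    simp only [Nat.cast_zero, zero_mul, map_zero, pow_zero, mul_one,
      Polynomial.derivative_C, mul_zero, zero_mul]
  · have h1 : m 0 + 1 + m 1 ≤ d := by omega
    rw [Polynomial.revAt_le h1, Polynomial.revAt_le hk,
      Polynomial.derivative_C_mul_X_pow]
    have h2 : d - (m 0 + 1 + m 1) = d - (m 0 + m 1) - 1 := by omega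
    have h3 : ((d - (m 0 + m 1) : ℕ) : ℝ) * coeff m r * x1 ^ (m 0 + 1) * x2 ^ (m 1)
        = x1 * (coeff m r * x1 ^ (m 0) * x2 ^ (m 1) * ((d - (m 0 + m 1) : ℕ) : ℝ)) := by
      ring
    rw [h2, ← mul_assoc, ← Polynomial.C_mul, h3]

def DegOK (d : ℕ) (p : MvPolynomial (Fin 2) ℝ) : Prop :=
  ∀ m ∈ p.support, m 0 + m 1 ≤ d

lemma degOK_Td {d : ℕ} {r : MvPolynomial (Fin 2) ℝ} : DegOK d (Td d r) := by
  classical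
  intro m' hm'
  obtain ⟨m, hm, hmem⟩ := Finset.mem_biUnion.1 (MvPolynomial.support_sum hm')
  rw [MvPolynomial.mem_support_iff, MvPolynomial.coeff_monomial] at hmem
  by_cases h : m + e0 = m'
  · rw [if_pos h] at hmem
    have hdk : (d - (m 0 + m 1) : ℕ) ≠ 0 := by
      intro h0
      rw [h0] at hmem
      simp at hmem
    have h0 : m' 0 = m 0 + 1 := by rw [← h, e0_apply0]
    have h1 : m' 1 = m 1 := by rw [← h, e0_apply1]
    omega
  · rw [if_neg h] at hmem
    simp at hmem

lemma support_C_mul_subset (s : ℝ) (p : MvPolynomial (Fin 2) ℝ) :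
    (MvPolynomial.C s * p).support ⊆ p.support := by
  intro m hm
  rw [MvPolynomial.mem_support_iff, MvPolynomial.coeff_C_mul] at hm
  rw [MvPolynomial.mem_support_iff]
  intro h0
  rw [h0, mul_zero] at hm
  exact hm rfl

lemma degOK_Ns {d : ℕ} {s : ℝ} {r : MvPolynomial (Fin 2) ℝ} (hr : DegOK d r) :
    DegOK d (Ns d s r) := by
  classical
  intro m hm
  rcases Finset.mem_union.1 (MvPolynomial.support_add hm) with h | h
  · exact hr m h
  · exact degOK_Td m (support_C_mul_subset s _ h)

lemma coeff0_Td {d : ℕ} (r : MvPolynomial (Fin 2) ℝ) : coeff 0 (Td d r) = 0 := by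
  classical
  rw [Td]
  rw [show (coeff 0 (∑ m ∈ r.support, monomial (m + e0)
      ((((d - (m 0 + m 1)) : ℕ) : ℝ) * coeff m r)) : ℝ)
    = ∑ m ∈ r.support, coeff 0 (monomial (m + e0)
      ((((d - (m 0 + m 1)) : ℕ) : ℝ) * coeff m r)) from by
    simp [MvPolynomial.coeff_sum]]
  apply Finset.sum_eq_zero
  intro m _
  rw [MvPolynomial.coeff_monomial, if_neg]
  intro h
  have h0 : (m + e0) 0 = (0 : Fin 2 →₀ ℕ) 0 := by rw [h]
  rw [e0_apply0] at h0
  simp at h0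

lemma coeff0_Ns {d : ℕ} {s : ℝ} (r : MvPolynomial (Fin 2) ℝ) :
    coeff 0 (Ns d s r) = coeff 0 r := by
  rw [Ns, MvPolynomial.coeff_add, MvPolynomial.coeff_C_mul, coeff0_Td, mul_zero, add_zero]

noncomputable def nu (p : MvPolynomial (Fin 2) ℝ) : ℝ := ∑ m ∈ p.support, |coeff m p|

lemma nu_nonneg (p : MvPolynomial (Fin 2) ℝ) : 0 ≤ nu p :=
  Finset.sum_nonneg fun _ _ => abs_nonneg _

lemma nu_eq_superset {p : MvPolynomial (Fin 2) ℝ} {S : Finset (Fin 2 →₀ ℕ)}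
    (h : p.support ⊆ S) : nu p = ∑ m ∈ S, |coeff m p| :=
  Finset.sum_subset h fun m _ hm => by
    rw [MvPolynomial.notMem_support_iff.1 hm, abs_zero]

lemma abs_coeff_le_nu (p : MvPolynomial (Fin 2) ℝ) (m : Fin 2 →₀ ℕ) :
    |coeff m p| ≤ nu p := by
  by_cases hm : m ∈ p.support
  · exact Finset.single_le_sum (f := fun m => |coeff m p|) (fun _ _ => abs_nonneg _) hm
  · rw [MvPolynomial.notMem_support_iff.1 hm, abs_zero]
    exact nu_nonneg p

lemma nu_add_le (p q : MvPolynomial (Fin 2) ℝ) : nu (p + q) ≤ nu p + nu q := by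
  classical
  rw [nu_eq_superset (MvPolynomial.support_add (p := p) (q := q)),
    nu_eq_superset (Finset.subset_union_left : p.support ⊆ p.support ∪ q.support),
    nu_eq_superset (Finset.subset_union_right : q.support ⊆ p.support ∪ q.support),
    ← Finset.sum_add_distrib]
  apply Finset.sum_le_sum
  intro m _
  rw [MvPolynomial.coeff_add]
  exact abs_add_le _ _

lemma nu_C_mul_le (s : ℝ) (p : MvPolynomial (Fin 2) ℝ) : nu (MvPolynomial.C s * p) ≤ |s| * nu p := by
  rw [nu_eq_superset (support_C_mul_subset s p), nu, Finset.mul_sum]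
  apply Finset.sum_le_sum
  intro m _
  rw [MvPolynomial.coeff_C_mul, abs_mul]

lemma nu_monomial_le (n : Fin 2 →₀ ℕ) (a : ℝ) : nu (monomial n a) ≤ |a| := by
  classical
  by_cases ha : a = 0
  · subst ha
    rw [show (monomial n (0:ℝ)) = 0 from by simp, show nu 0 = 0 from by simp [nu]]
    simp
  · rw [nu, MvPolynomial.support_monomial, if_neg ha, Finset.sum_singleton,
      MvPolynomial.coeff_monomial, if_pos rfl]

lemma nu_sum_le {α : Type*} (S : Finset α) (g : α → MvPolynomial (Fin 2) ℝ) :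
    nu (∑ i ∈ S, g i) ≤ ∑ i ∈ S, nu (g i) := by
  classical
  induction S using Finset.induction_on with
  | empty => simp [nu]
  | insert _ _ hni ih =>
      rw [Finset.sum_insert hni, Finset.sum_insert hni]
      exact le_trans (nu_add_le _ _) (by linarith)

lemma nu_Td_le (d : ℕ) (r : MvPolynomial (Fin 2) ℝ) : nu (Td d r) ≤ d * nu r := by
  refine le_trans (nu_sum_le _ _) ?_
  rw [nu, Finset.mul_sum]
  apply Finset.sum_le_sum
  intro m _
  refine le_trans (nu_monomial_le _ _) ?_
  rw [abs_mul, Nat.abs_cast]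
  apply mul_le_mul_of_nonneg_right _ (abs_nonneg _)
  exact_mod_cast Nat.cast_le.2 (Nat.sub_le d (m 0 + m 1))

lemma nu_Ns_le {d : ℕ} {s : ℝ} (hs : |s| ≤ 1) (r : MvPolynomial (Fin 2) ℝ) :
    nu (Ns d s r) ≤ (1 + d) * nu r := by
  have h1 : nu (Ns d s r) ≤ nu r + |s| * nu (Td d r) :=
    le_trans (nu_add_le _ _) (by linarith [nu_C_mul_le s (Td d r)])
  have h2 : nu (Td d r) ≤ d * nu r := nu_Td_le d r
  have h3 : 0 ≤ nu (Td d r) := nu_nonneg _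
  have h4 : 0 ≤ nu r := nu_nonneg _
  nlinarith [abs_nonneg s]

lemma nu_iter_le {d : ℕ} {s : ℝ} (hs : |s| ≤ 1) (p : MvPolynomial (Fin 2) ℝ) :
    ∀ k, nu ((Ns d s)^[k] p) ≤ (1 + d : ℝ)^k * nu p := by
  intro k
  induction k with
  | zero => simp
  | succ k ih =>
      rw [Function.iterate_succ_apply']
      refine le_trans (nu_Ns_le hs _) ?_
      have h1 : (0:ℝ) ≤ 1 + d := by positivity
      calc (1 + d : ℝ) * nu ((Ns d s)^[k] p) ≤ (1 + d) * ((1+d)^k * nu p) := by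
            exact mul_le_mul_of_nonneg_left ih h1
        _ = (1 + d)^(k+1) * nu p := by ring

lemma coeff_iter_close {d : ℕ} {s : ℝ} (hs : |s| ≤ 1) (p : MvPolynomial (Fin 2) ℝ) :
    ∀ k m, |coeff m ((Ns d s)^[k] p) - coeff m p| ≤
      |s| * (k * (d * ((1 + d : ℝ)^k * nu p))) := by
  intro k
  induction k with
  | zero =>
      intro m
      have := nu_nonneg p
      simp
  | succ k ih =>
      intro m
      rw [Function.iterate_succ_apply']
      set r := (Ns d s)^[k] p with hr
      have hco : coeff m (Ns d s r) = coeff m r + s * coeff m (Td d r) := by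
        rw [Ns, MvPolynomial.coeff_add, MvPolynomial.coeff_C_mul]
      have htri : |coeff m (Ns d s r) - coeff m p| ≤
          |coeff m r - coeff m p| + |s| * |coeff m (Td d r)| := by
        rw [hco]
        calc |coeff m r + s * coeff m (Td d r) - coeff m p|
            ≤ |coeff m r - coeff m p| + |s * coeff m (Td d r)| := by
              rw [show coeff m r + s * coeff m (Td d r) - coeff m p
                = (coeff m r - coeff m p) + s * coeff m (Td d r) from by ring]
              exact abs_add_le _ _
          _ = |coeff m r - coeff m p| + |s| * |coeff m (Td d r)| := by rw [abs_mul]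
      have hTd : |coeff m (Td d r)| ≤ d * ((1+d:ℝ)^k * nu p) := by
        refine le_trans (abs_coeff_le_nu _ _) (le_trans (nu_Td_le d r) ?_)
        exact mul_le_mul_of_nonneg_left (nu_iter_le hs p k) (by positivity)
      have hnu := nu_nonneg p
      have hpowle : ((1+d:ℝ))^k ≤ (1+d:ℝ)^(k+1) := by
        refine pow_le_pow_right₀ (by linarith [Nat.cast_nonneg (α := ℝ) d]) (by omega)
      have hih := ih m
      have habs := abs_nonneg s
      have hd0 : (0:ℝ) ≤ d := Nat.cast_nonneg d
      set Xk := (d : ℝ) * ((1+d:ℝ)^k * nu p) with hXk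
      set Xk1 := (d : ℝ) * ((1+d:ℝ)^(k+1) * nu p) with hXk1
      have hXpos : 0 ≤ Xk := by positivity
      have hXle : Xk ≤ Xk1 :=
        mul_le_mul_of_nonneg_left (mul_le_mul_of_nonneg_right hpowle hnu) hd0
      have hk1 : (0:ℝ) ≤ (k:ℝ) + 1 := by positivity
      calc |coeff m (Ns d s r) - coeff m p|
          ≤ |coeff m r - coeff m p| + |s| * |coeff m (Td d r)| := htri
        _ ≤ |s| * (k * Xk) + |s| * Xk :=
            add_le_add hih (mul_le_mul_of_nonneg_left hTd habs)
        _ = |s| * (((k:ℝ)+1) * Xk) := by ring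
        _ ≤ |s| * (((k:ℝ)+1) * Xk1) :=
            mul_le_mul_of_nonneg_left (mul_le_mul_of_nonneg_left hXle hk1) habs
        _ = |s| * ((((k:ℕ)+1 : ℕ) : ℝ) * Xk1) := by push_cast; ring

lemma msum_zero {m : Fin 2 →₀ ℕ} (h : m 0 + m 1 = 0) : m = 0 := by
  have h1 : m 0 = 0 := by omega
  have h2 : m 1 = 0 := by omega
  ext i
  fin_cases i
  · simpa using h1
  · simpa using h2

lemma fP_coeff_d {d : ℕ} {p : MvPolynomial (Fin 2) ℝ} (x1 x2 : ℝ) (hp : DegOK d p)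
    (h0 : coeff 0 p = 1) (hd : 0 < d) : (fP d x1 x2 p).coeff d = 1 := by
  classical
  rw [fP_eq_sum, Polynomial.finset_sum_coeff]
  have hmem : (0 : Fin 2 →₀ ℕ) ∈ p.support := by
    rw [MvPolynomial.mem_support_iff, h0]; exact one_ne_zero
  rw [Finset.sum_eq_single_of_mem 0 hmem]
  · simp [h0, Polynomial.coeff_C_mul, Polynomial.coeff_X_pow,
      Polynomial.revAt_le (Nat.zero_le d)]
  · intro m hm hne
    rw [Polynomial.coeff_C_mul, Polynomial.coeff_X_pow, if_neg, mul_zero]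
    intro hEq
    have hk : m 0 + m 1 ≤ d := hp m hm
    rw [Polynomial.revAt_le hk] at hEq
    have : m 0 + m 1 = 0 := by omega
    exact hne (msum_zero this)

lemma fP_monic {d : ℕ} {p : MvPolynomial (Fin 2) ℝ} (x1 x2 : ℝ) (hp : DegOK d p)
    (h0 : coeff 0 p = 1) (hd : 0 < d) :
    (fP d x1 x2 p).Monic ∧ (fP d x1 x2 p).natDegree = d := by
  have hle : (fP d x1 x2 p).natDegree ≤ d := by
    rw [fP_eq_sum]
    apply Polynomial.natDegree_sum_le_of_forall_le
    intro m hm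
    refine le_trans (Polynomial.natDegree_C_mul_le _ _) ?_
    rw [Polynomial.natDegree_X_pow, Polynomial.revAt_le (hp m hm)]
    omega
  have hc := fP_coeff_d x1 x2 hp h0 hd
  have hmonic := Polynomial.monic_of_natDegree_le_of_coeff_eq_one d hle hc
  refine ⟨hmonic, le_antisymm hle ?_⟩
  exact Polynomial.le_natDegree_of_ne_zero (by rw [hc]; exact one_ne_zero)

lemma line_eval {d : ℕ} {p : MvPolynomial (Fin 2) ℝ} (hp : DegOK d p) (x1 x2 : ℝ)
    {t : ℂ} (ht : t ≠ 0) :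
    MvPolynomial.eval ![t * (x1:ℂ), t * (x2:ℂ)] (MvPolynomial.map (algebraMap ℝ ℂ) p)
      = t^d * Polynomial.aeval t⁻¹ (fP d x1 x2 p) := by
  rw [MvPolynomial.eval_map, MvPolynomial.eval₂_eq', fP_eq_sum, map_sum, Finset.mul_sum]
  apply Finset.sum_congr rfl
  intro m hm
  rw [Fin.prod_univ_two]
  simp only [Matrix.cons_val_zero, Matrix.cons_val_one, Matrix.head_cons]
  rw [map_mul, Polynomial.aeval_C, map_pow, Polynomial.aeval_X,
    Polynomial.revAt_le (hp m hm)]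
  rw [show (algebraMap ℝ ℂ) (coeff m p * x1 ^ m 0 * x2 ^ m 1)
    = (algebraMap ℝ ℂ) (coeff m p) * ((x1:ℂ)) ^ m 0 * ((x2:ℂ)) ^ m 1 from by
      push_cast [Complex.coe_algebraMap]
      ring]
  have hk : m 0 + m 1 ≤ d := hp m hm
  have hpow : t ^ d * (t⁻¹) ^ (d - (m 0 + m 1)) = t ^ (m 0 + m 1) := by
    have hsplit : t ^ d = t ^ (m 0 + m 1) * t ^ (d - (m 0 + m 1)) := by
      rw [← pow_add]
      congr 1
      omega
    rw [inv_pow, hsplit, mul_assoc, mul_inv_cancel₀ (pow_ne_zero _ ht), mul_one]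
  calc (algebraMap ℝ ℂ) (coeff m p) * ((t * x1) ^ m 0 * (t * x2) ^ m 1)
      = (algebraMap ℝ ℂ) (coeff m p) * (x1:ℂ) ^ m 0 * (x2:ℂ) ^ m 1 * (t ^ (m 0 + m 1)) := by
        rw [mul_pow, mul_pow, pow_add]; ring
    _ = t ^ d * ((algebraMap ℝ ℂ) (coeff m p) * (x1:ℂ) ^ m 0 * (x2:ℂ) ^ m 1
          * (t⁻¹) ^ (d - (m 0 + m 1))) := by
        rw [← hpow]; ring

lemma checkPoly_eq_fP {d : ℕ} {q : MvPolynomial (Fin 2) ℝ} (x2 : ℝ) (hq : DegOK d q) :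
    checkPoly d q x2 = fP d 1 x2 q := by
  rw [checkPoly, fP_eq_sum]
  apply Finset.sum_congr rfl
  intro m hm
  rw [Polynomial.revAt_le (hq m hm)]
  ring_nf

lemma degOK_iter {d : ℕ} {s : ℝ} {p : MvPolynomial (Fin 2) ℝ} (hp : DegOK d p) :
    ∀ k, DegOK d ((Ns d s)^[k] p) := by
  intro k
  induction k with
  | zero => simpa using hp
  | succ k ih =>
      rw [Function.iterate_succ_apply']
      exact degOK_Ns ih

lemma coeff0_iter {d : ℕ} {s : ℝ} {p : MvPolynomial (Fin 2) ℝ} :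
    ∀ k, coeff 0 ((Ns d s)^[k] p) = coeff 0 p := by
  intro k
  induction k with
  | zero => simp
  | succ k ih => rw [Function.iterate_succ_apply', coeff0_Ns, ih]

lemma fP_Ns {d : ℕ} {s : ℝ} {r : MvPolynomial (Fin 2) ℝ} (x1 x2 : ℝ) (hr : DegOK d r) :
    fP d x1 x2 (Ns d s r) = Phi (s * x1) (fP d x1 x2 r) := by
  rw [Ns, fP_add, fP_C_mul, fP_Td d x1 x2 r hr, Phi, ← mul_assoc, ← Polynomial.C_mul]

lemma fP_iter {d : ℕ} {s : ℝ} {p : MvPolynomial (Fin 2) ℝ} (x1 x2 : ℝ) (hp : DegOK d p) :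
    ∀ k, fP d x1 x2 ((Ns d s)^[k] p) = (Phi (s * x1))^[k] (fP d x1 x2 p) := by
  intro k
  induction k with
  | zero => simp
  | succ k ih =>
      rw [Function.iterate_succ_apply', Function.iterate_succ_apply',
        fP_Ns x1 x2 (degOK_iter hp k), ih]

lemma aeval_Mc (f : Polynomial ℝ) (z : ℂ) :
    Polynomial.eval z (Mc f) = Polynomial.aeval z f := by
  rw [Mc, Polynomial.eval_map, Polynomial.aeval_def]

lemma msum_eq (m : Fin 2 →₀ ℕ) : (m.sum fun _ e => e) = m 0 + m 1 := by
  rw [Finsupp.sum_fintype _ _ (fun i => rfl), Fin.sum_univ_two]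

lemma degOK_of_totalDegree {d : ℕ} {p : MvPolynomial (Fin 2) ℝ}
    (h : p.totalDegree ≤ d) : DegOK d p := by
  intro m hm
  rw [← msum_eq]
  exact le_trans (MvPolynomial.le_totalDegree hm) h

lemma totalDegree_le_of_degOK {d : ℕ} {p : MvPolynomial (Fin 2) ℝ}
    (hp : DegOK d p) : p.totalDegree ≤ d := by
  rw [MvPolynomial.totalDegree]
  apply Finset.sup_le
  intro m hm
  rw [msum_eq]
  exact hp m hm

lemma RZ_fP {d : ℕ} {p : MvPolynomial (Fin 2) ℝ} (hp : DegOK d p)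
    (hrz : IsRealZeroPoly p) (x1 x2 : ℝ) : RZ (Mc (fP d x1 x2 p)) := by
  intro z hz
  by_cases hz0 : z = 0
  · rw [hz0]; rfl
  have ht : z⁻¹ ≠ 0 := inv_ne_zero hz0
  have haev : Polynomial.aeval ((z⁻¹)⁻¹) (fP d x1 x2 p) = 0 := by
    rw [inv_inv]
    rw [← aeval_Mc]
    exact hz
  have hline := line_eval hp x1 x2 ht
  rw [haev, mul_zero] at hline
  have htim := hrz x1 x2 z⁻¹ hline
  rw [← inv_inv z, Complex.inv_im, htim, neg_zero, zero_div]

lemma isRealZero_of_RZ {d : ℕ} {p : MvPolynomial (Fin 2) ℝ} (hp : DegOK d p)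
    (h0 : coeff 0 p = 1) (hall : ∀ x1 x2 : ℝ, RZ (Mc (fP d x1 x2 p))) :
    IsRealZeroPoly p := by
  intro x1 x2 t hteval
  by_cases ht : t = 0
  · subst ht
    have hv : ![(0:ℂ) * (x1:ℂ), (0:ℂ) * (x2:ℂ)] = (fun _ => (0:ℂ)) := by
      funext i
      fin_cases i <;> simp
    rw [hv, MvPolynomial.eval_zero', MvPolynomial.constantCoeff_map,
      MvPolynomial.constantCoeff_eq] at hteval
    simp only [h0] at hteval
    simp at hteval
  · have hline := line_eval hp x1 x2 ht
    rw [hteval] at hline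
    have haev : Polynomial.aeval t⁻¹ (fP d x1 x2 p) = 0 := by
      rcases mul_eq_zero.1 hline.symm with h | h
      · exact absurd h (pow_ne_zero _ ht)
      · exact h
    have hroot : (Mc (fP d x1 x2 p)).IsRoot t⁻¹ := by
      rw [Polynomial.IsRoot, aeval_Mc]
      exact haev
    have := hall x1 x2 t⁻¹ hroot
    rw [← inv_inv t, Complex.inv_im, this, neg_zero, zero_div]

lemma Gd_iter {d : ℕ} (hd : 0 < d) {f : Polynomial ℝ} (h : Gd d f) (c : ℝ) :
    ∀ k, Gd d ((Phi c)^[k] f) := by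
  intro k
  induction k with
  | zero => simpa using h
  | succ k ih =>
      rw [Function.iterate_succ_apply']
      exact Gd_Phi hd ih c

theorem stmt14 (d : ℕ) (hd : 0 < d) (p : MvPolynomial (Fin 2) ℝ)
    (hdeg : p.totalDegree = d) (h0 : coeff 0 p = 1) (hrz : IsRealZeroPoly p) :
    ∀ ε : ℝ, 0 < ε → ∃ q : MvPolynomial (Fin 2) ℝ,
      IsRealZeroPoly q ∧ q.totalDegree = d ∧ coeff 0 q = 1 ∧
      (∀ m : Fin 2 →₀ ℕ, |coeff m q - coeff m p| ≤ ε) ∧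
      ∀ x2 : ℝ, ∀ z : ℂ,
        Polynomial.aeval z (checkPoly d q x2) = 0 →
          z.im = 0 ∧ Polynomial.aeval z (Polynomial.derivative (checkPoly d q x2)) ≠ 0 := by
  classical
  intro ε hε
  have hdegOK : DegOK d p := degOK_of_totalDegree (le_of_eq hdeg)
  -- top-degree witness monomial
  have h0mem : (0 : Fin 2 →₀ ℕ) ∈ p.support := by
    rw [MvPolynomial.mem_support_iff, h0]; exact one_ne_zero
  obtain ⟨mstar, hmstar, hmsum⟩ :=
    Finset.exists_mem_eq_sup p.support ⟨0, h0mem⟩ (fun m : Fin 2 →₀ ℕ => m.sum fun _ e => e)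
  have hmsum' : (mstar.sum fun _ e => e) = d := by
    rw [← hmsum]
    rw [show p.support.sup (fun m : Fin 2 →₀ ℕ => m.sum fun _ e => e) = p.totalDegree from rfl,
      hdeg]
  have hcstar : coeff mstar p ≠ 0 := MvPolynomial.mem_support_iff.1 hmstar
  have hcstarpos : 0 < |coeff mstar p| := abs_pos.2 hcstar
  -- bound constant
  set B : ℝ := ((d - 1 : ℕ) : ℝ) * ((d : ℝ) * ((1 + d : ℝ)^(d-1) * nu p)) with hB
  have hBnn : 0 ≤ B := by
    have := nu_nonneg p
    positivity
  -- choose s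
  set s : ℝ := min 1 (min (ε / (B + 1)) (|coeff mstar p| / (2 * (B + 1)))) with hs
  have hspos : 0 < s := by
    apply lt_min
    · norm_num
    · apply lt_min
      · positivity
      · positivity
  have hs1 : s ≤ 1 := min_le_left _ _
  have hsabs : |s| = s := abs_of_pos hspos
  have hsabs1 : |s| ≤ 1 := by rw [hsabs]; exact hs1
  have hsne : s ≠ 0 := ne_of_gt hspos
  set q := (Ns d s)^[d-1] p with hq
  have hqOK : DegOK d q := degOK_iter hdegOK (d-1)
  have hq0 : coeff 0 q = 1 := by rw [hq, coeff0_iter, h0]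
  have hclose : ∀ m, |coeff m q - coeff m p| ≤ s * B := by
    intro m
    have := coeff_iter_close (d := d) hsabs1 p (d-1) m
    rw [hsabs] at this
    exact this
  have hsB_eps : s * B ≤ ε := by
    have h1 : s ≤ ε / (B + 1) := le_trans (min_le_right _ _) (min_le_left _ _)
    have h2 : s * B ≤ (ε / (B + 1)) * B := mul_le_mul_of_nonneg_right h1 hBnn
    have h3 : (ε / (B + 1)) * B ≤ ε := by
      rw [div_mul_eq_mul_div, div_le_iff₀ (by linarith)]
      nlinarith
    linarith
  have hsB_star : s * B < |coeff mstar p| := by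
    have h1 : s ≤ |coeff mstar p| / (2 * (B + 1)) :=
      le_trans (min_le_right _ _) (min_le_right _ _)
    have h2 : s * B ≤ (|coeff mstar p| / (2 * (B + 1))) * B :=
      mul_le_mul_of_nonneg_right h1 hBnn
    have h3 : (|coeff mstar p| / (2 * (B + 1))) * B < |coeff mstar p| := by
      rw [div_mul_eq_mul_div, div_lt_iff₀ (by linarith)]
      nlinarith
    linarith
  have hqstar : coeff mstar q ≠ 0 := by
    intro hzero
    have := hclose mstar
    rw [hzero, zero_sub, abs_neg] at this
    linarith
  -- the univariate data
  have hGd : ∀ x1 x2 : ℝ, Gd d (fP d x1 x2 p) := by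
    intro x1 x2
    obtain ⟨hm, hnd⟩ := fP_monic x1 x2 hdegOK h0 hd
    exact ⟨hm, hnd, RZ_fP hdegOK hrz x1 x2⟩
  refine ⟨q, ?_, ?_, hq0, ?_, ?_⟩
  · -- IsRealZeroPoly q
    apply isRealZero_of_RZ hqOK hq0
    intro x1 x2
    rw [hq, fP_iter x1 x2 hdegOK]
    exact (Gd_iter hd (hGd x1 x2) (s * x1) (d-1)).2.2
  · -- total degree
    refine le_antisymm (totalDegree_le_of_degOK hqOK) ?_
    have : (mstar.sum fun _ e => e) ≤ q.totalDegree :=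
      MvPolynomial.le_totalDegree (MvPolynomial.mem_support_iff.2 hqstar)
    rw [hmsum'] at this
    exact this
  · -- coefficient bounds
    intro m
    exact le_trans (hclose m) hsB_eps
  · -- simple real zeros of checkPoly
    intro x2 z hz
    have hrw : checkPoly d q x2 = (Phi (s * 1))^[d-1] (fP d 1 x2 p) := by
      rw [checkPoly_eq_fP x2 hqOK, hq, fP_iter 1 x2 hdegOK]
    have hc1 : s * 1 ≠ 0 := by simpa using hsne
    have hroot : (Mc ((Phi (s*1))^[d-1] (fP d 1 x2 p))).IsRoot z := by
      rw [Polynomial.IsRoot, aeval_Mc, ← hrw]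
      exact hz
    obtain ⟨him, hder⟩ := univ_main hd (hGd 1 x2) hc1 z hroot
    refine ⟨him, ?_⟩
    intro hcontra
    apply hder
    rw [Polynomial.IsRoot]
    rw [show Polynomial.derivative (Mc ((Phi (s*1))^[d-1] (fP d 1 x2 p)))
      = Mc (Polynomial.derivative ((Phi (s*1))^[d-1] (fP d 1 x2 p))) from by
        rw [Mc, Mc, Polynomial.derivative_map]]
    rw [aeval_Mc, ← hrw]
    exact hcontra
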